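/- Let X be a topological space and x₀ ∈ X. Suppose X is SLTP at x₀ (every path α in X with α(0) = x₀ and α(1) ≠ x₀ is an SLT path) and suppose that for every open neighborhood U of x₀ the subgroup i_*π₁(U, x₀) is a normal subgroup of π₁(X, x₀), where i_* is induced by the inclusion U → X. Then X is a small loop transfer space at x₀. -/

import Mathlib

open TopologicalSpace

attribute [local instance] Path.Homotopic.setoid

/-- The homotopy class of a loop, as an element of the fundamental group. -/
noncomputable def loopClass {X : Type*} [TopologicalSpace X] {x : X} (γ : Path x x) :
    FundamentalGroup X x :=
  FundamentalGroup.fromPath (X := TopCat.of X) ⟦γ⟧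

/-- `α` is a small loop transfer (SLT) path: for every open neighborhood `U` of `α 0`
there is an open neighborhood `V` of `α 1` such that every loop at `α 1` inside `V` is
path-homotopic to some loop at `α 0` inside `U` conjugated along `α`. -/
def IsSLTPath {X : Type*} [TopologicalSpace X] {x₀ x₁ : X} (α : Path x₀ x₁) : Prop :=
  ∀ U : Set X, IsOpen U → x₀ ∈ U →
    ∃ V : Set X, IsOpen V ∧ x₁ ∈ V ∧
      ∀ γ : Path x₁ x₁, (∀ t, γ t ∈ V) →
        ∃ γ' : Path x₀ x₀, (∀ t, γ' t ∈ U) ∧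
          γ'.Homotopic ((α.trans γ).trans α.symm)

/-- `X` is a small loop transfer space at `x₀`: every path starting at `x₀` is an SLT path. -/
def IsSLTAt (X : Type*) [TopologicalSpace X] (x₀ : X) : Prop :=
  ∀ (x₁ : X) (α : Path x₀ x₁), IsSLTPath α

/-- `X` is SLTL at `x₀`: every loop based at `x₀` is an SLT path. -/
def IsSLTLAt (X : Type*) [TopologicalSpace X] (x₀ : X) : Prop :=
  ∀ γ : Path x₀ x₀, IsSLTPath γ

/-- `X` is SLTP at `x₀`: every non-loop path starting at `x₀` is an SLT path. -/
def IsSLTPAt (X : Type*) [TopologicalSpace X] (x₀ : X) : Prop :=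
  ∀ (x₁ : X) (α : Path x₀ x₁), x₁ ≠ x₀ → IsSLTPath α

/-- The set of homotopy classes of loops based at `x₀` with image contained in `U`;
this is the image `i₊π₁(U, x₀)` of the homomorphism induced by the inclusion `U → X`. -/
noncomputable def loopClassesIn {X : Type*} [TopologicalSpace X] (x₀ : X) (U : Set X) :
    Set (FundamentalGroup X x₀) :=
  { g | ∃ γ : Path x₀ x₀, (∀ t, γ t ∈ U) ∧ g = loopClass γ }

/-- The quotient topology on the fundamental group, coinduced by the map from the loop
space (with the compact-open topology) sending a loop to its homotopy class. -/
noncomputable def qtop (X : Type*) [TopologicalSpace X] (x₀ : X) :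
    TopologicalSpace (FundamentalGroup X x₀) :=
  coinduced (fun γ : Path x₀ x₀ => loopClass γ) inferInstance

/-- The whisker topology on the fundamental group, generated by the basis of cosets
`[α] · i₊π₁(U, x₀)` for `U` an open neighborhood of `x₀`. -/
noncomputable def whTop (X : Type*) [TopologicalSpace X] (x₀ : X) :
    TopologicalSpace (FundamentalGroup X x₀) :=
  generateFrom { S | ∃ (g : FundamentalGroup X x₀) (U : Set X), IsOpen U ∧ x₀ ∈ U ∧
      S = (fun h => g * h) '' loopClassesIn x₀ U }

/-- A loop based at `x` is small if every open neighborhood of `x` contains a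
representative of its homotopy class. -/
def IsSmallLoop {X : Type*} [TopologicalSpace X] {x : X} (γ : Path x x) : Prop :=
  ∀ U : Set X, IsOpen U → x ∈ U →
    ∃ δ : Path x x, (∀ t, δ t ∈ U) ∧ δ.Homotopic γ

/-- `π₁ˢ(X, x)`: the set of homotopy classes of small loops based at `x`. -/
noncomputable def pi1s {X : Type*} [TopologicalSpace X] (x : X) :
    Set (FundamentalGroup X x) :=
  { g | ∃ γ : Path x x, IsSmallLoop γ ∧ g = loopClass γ }

/-- `π₁ˢᵍ(X, x₀)`: the subgroup generated by classes `[α * β * α⁻¹]` where `α` is a path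
starting at `x₀` and `β` is a small loop based at `α 1`. -/
noncomputable def pi1sg {X : Type*} [TopologicalSpace X] (x₀ : X) :
    Subgroup (FundamentalGroup X x₀) :=
  Subgroup.closure { g | ∃ (x₁ : X) (α : Path x₀ x₁) (β : Path x₁ x₁), IsSmallLoop β ∧
      g = loopClass ((α.trans β).trans α.symm) }

/-- The path Spanier group of a path open cover `V` at `x₀`: the subgroup generated by the
classes `[α * β * α⁻¹]` where `α` is a path starting at `x₀` and `β` is a loop based at
`α 1` with image inside `V α`. -/
noncomputable def pathSpanierGroup {X : Type*} [TopologicalSpace X] (x₀ : X)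
    (V : ∀ x₁ : X, Path x₀ x₁ → Set X) : Subgroup (FundamentalGroup X x₀) :=
  Subgroup.closure { g | ∃ (x₁ : X) (α : Path x₀ x₁) (β : Path x₁ x₁),
      (∀ t, β t ∈ V x₁ α) ∧ g = loopClass ((α.trans β).trans α.symm) }

/-- `X` is small "small loop" transfer (SSLT) at `x₀`. -/
def IsSSLTAt (X : Type*) [TopologicalSpace X] (x₀ : X) : Prop :=
  ∀ (x₁ : X) (α : Path x₀ x₁) (U : Set X), IsOpen U → x₀ ∈ U →
    ∃ V : Set X, IsOpen V ∧ x₁ ∈ V ∧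
      ∀ β : Path x₁ x₁, IsSmallLoop β → (∀ t, β t ∈ V) →
        ∃ γ : Path x₀ x₀, (∀ t, γ t ∈ U) ∧
          γ.Homotopic ((α.trans β).trans α.symm)

/-- `X` is semilocally small generated: every point has an open neighborhood `U` with
`i₊π₁(U, x) ≤ π₁ˢᵍ(X, x)`. -/
noncomputable def SemilocallySmallGenerated (X : Type*) [TopologicalSpace X] : Prop :=
  ∀ x : X, ∃ U : Set X, IsOpen U ∧ x ∈ U ∧ loopClassesIn x U ⊆ (pi1sg x : Set (FundamentalGroup X x))

lemma loopClass_hom {X : Type*} [TopologicalSpace X] {x : X} (γ : Path x x) :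
    (loopClass γ) = (⟦γ⟧ : Path.Homotopic.Quotient x x) := rfl

lemma loopClass_mul {X : Type*} [TopologicalSpace X] {x : X} (γ δ : Path x x) :
    loopClass γ * loopClass δ = loopClass (δ.trans γ) := by
  rfl

lemma loopClass_refl {X : Type*} [TopologicalSpace X] {x : X} :
    loopClass (Path.refl x) = 1 := by
  rfl

lemma loopClass_symm {X : Type*} [TopologicalSpace X] {x : X} (α : Path x x) :
    loopClass α.symm = (loopClass α)⁻¹ := by
  apply eq_inv_of_mul_eq_one_left
  rw [loopClass_mul]
  rw [show loopClass (α.trans α.symm) = loopClass (Path.refl x) from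
    (Quotient.sound (Path.Homotopic.symm ⟨Path.Homotopy.reflTransSymm α⟩)), loopClass_refl]

lemma loopClass_eq_iff {X : Type*} [TopologicalSpace X] {x : X} {γ δ : Path x x} :
    loopClass γ = loopClass δ ↔ γ.Homotopic δ := by
  constructor
  · intro h
    have := h
    exact Quotient.exact this
  · intro h
    exact Quotient.sound h

/-- If `X` is SLTP at `x₀` and `i₊π₁(U, x₀)` is a normal subgroup of
`π₁(X, x₀)` for every open neighborhood `U` of `x₀`, then `X` is SLT at `x₀`. -/
theorem slt_of_sltp_of_normal {X : Type*} [TopologicalSpace X] (x₀ : X)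
    (hsltp : IsSLTPAt X x₀)
    (hnormal : ∀ U : Set X, IsOpen U → x₀ ∈ U →
      ∀ g : FundamentalGroup X x₀, ∀ h ∈ loopClassesIn x₀ U,
        g * h * g⁻¹ ∈ loopClassesIn x₀ U) :
    IsSLTAt X x₀ := by
  intro x₁ α
  by_cases h : x₁ = x₀
  · subst h
    intro U hU hxU
    refine ⟨U, hU, hxU, fun γ hγ => ?_⟩
    have hmem : loopClass γ ∈ loopClassesIn x₁ U := ⟨γ, hγ, rfl⟩
    obtain ⟨γ', hγ'U, heq⟩ :=
      hnormal U hU hxU (loopClass α)⁻¹ (loopClass γ) hmem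
    refine ⟨γ', hγ'U, ?_⟩
    rw [← loopClass_eq_iff]
    have : loopClass ((α.trans γ).trans α.symm)
        = (loopClass α)⁻¹ * loopClass γ * ((loopClass α)⁻¹)⁻¹ := by
      rw [← loopClass_mul, ← loopClass_mul, loopClass_symm, inv_inv]
      group
    rw [this, heq]
  · exact hsltp x₁ α h
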